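/- The restriction map from the ℤ-linear dual of the multilinear part T_{1,...,1}(x_1,...,x_n) of the tensor algebra to the ℤ-linear dual of the multilinear part Lie(n) of the free Lie algebra is surjective; i.e., every ℤ-linear functional on Lie(n) extends to a ℤ-linear functional on T_{1,...,1}. -/

import Mathlib

noncomputable section

/-- Multilinear Lie monomials in the free (tensor) algebra over `ℤ` on `Fin n`. -/
inductive LieMono (n : ℕ) : Finset (Fin n) → FreeAlgebra ℤ (Fin n) → Prop
  | gen (i : Fin n) : LieMono n {i} (FreeAlgebra.ι ℤ i)
  | bracket {s t : Finset (Fin n)} {a b : FreeAlgebra ℤ (Fin n)} :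
      LieMono n s a → LieMono n t b → Disjoint s t → LieMono n (s ∪ t) (a * b - b * a)

/-- The multilinear part `Lie(n)` of the free Lie algebra over `ℤ`. -/
def LieN (n : ℕ) : Submodule ℤ (FreeAlgebra ℤ (Fin n)) :=
  Submodule.span ℤ {x | LieMono n Finset.univ x}

/-- The multilinear word `e_σ = x_{σ(1)} ⊗ ⋯ ⊗ x_{σ(n)}`. -/
def word (n : ℕ) (σ : Equiv.Perm (Fin n)) : FreeAlgebra ℤ (Fin n) :=
  (List.ofFn fun i => FreeAlgebra.ι ℤ (σ i)).prod

/-- The multilinear part `T_{1,…,1}(x_1,…,x_n)` of the tensor algebra: the span of the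
words containing each generator exactly once. -/
def T11 (n : ℕ) : Submodule ℤ (FreeAlgebra ℤ (Fin n)) :=
  Submodule.span ℤ (Set.range (word n))

namespace S4

variable {n : ℕ}

def jj (i : Fin n) : FreeAlgebra ℤ (Fin n) := FreeAlgebra.ι ℤ i

/-- left-normed bracket -/
def lnb (i : Fin n) (u : List (Fin n)) : FreeAlgebra ℤ (Fin n) :=
  u.foldl (fun a j => a * jj j - jj j * a) (jj i)

@[simp] lemma lnb_nil (i : Fin n) : lnb i [] = jj i := rfl

lemma lnb_append (i : Fin n) (u : List (Fin n)) (j : Fin n) :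
    lnb i (u ++ [j]) = lnb i u * jj j - jj j * lnb i u := by
  simp [lnb, List.foldl_append]

/-- monomial word -/
def wd (m : List (Fin n)) : FreeAlgebra ℤ (Fin n) := (m.map jj).prod

@[simp] lemma wd_nil : wd ([] : List (Fin n)) = 1 := rfl
@[simp] lemma wd_cons (j : Fin n) (m : List (Fin n)) : wd (j :: m) = jj j * wd m := by
  simp [wd]
lemma wd_append (m m' : List (Fin n)) : wd (m ++ m') = wd m * wd m' := by
  simp [wd]
@[simp] lemma wd_singleton (j : Fin n) : wd [j] = jj j := by simp [wd]

def coeff (l : List (Fin n)) : FreeAlgebra ℤ (Fin n) →ₗ[ℤ] ℤ :=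
  (Finsupp.lapply (FreeMonoid.ofList l)).comp
    ((MonoidAlgebra.coeffLinearEquiv ℤ).toLinearMap.comp
      (FreeAlgebra.equivMonoidAlgebraFreeMonoid (R := ℤ) (X := Fin n)).toLinearMap)

lemma equiv_wd (m : List (Fin n)) :
    FreeAlgebra.equivMonoidAlgebraFreeMonoid (R := ℤ) (X := Fin n) (wd m)
      = MonoidAlgebra.single (FreeMonoid.ofList m) 1 := by
  induction m with
  | nil => simp [MonoidAlgebra.one_def]
  | cons j m ih =>
      rw [wd_cons, map_mul, ih]
      have hj : FreeAlgebra.equivMonoidAlgebraFreeMonoid (R := ℤ) (X := Fin n) (jj j)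
          = MonoidAlgebra.single (FreeMonoid.of j) 1 := by
        simp [jj, FreeAlgebra.equivMonoidAlgebraFreeMonoid]
      rw [hj, MonoidAlgebra.single_mul_single, one_mul]
      rfl

lemma coeff_wd (l m : List (Fin n)) : coeff l (wd m) = if m = l then 1 else 0 := by
  classical
  have h0 : coeff l (wd m) = (FreeAlgebra.equivMonoidAlgebraFreeMonoid (R := ℤ) (X := Fin n) (wd m)).coeff (FreeMonoid.ofList l) := rfl
  rw [h0, equiv_wd, MonoidAlgebra.single_apply]
  simp [Equiv.apply_eq_iff_eq]


/-- Span of words not starting with `i`. -/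
def K (i : Fin n) : Submodule ℤ (FreeAlgebra ℤ (Fin n)) :=
  Submodule.span ℤ {x | ∃ m : List (Fin n), m.head? ≠ some i ∧ x = wd m}

lemma wd_mem_K {i : Fin n} {m : List (Fin n)} (h : m.head? ≠ some i) : wd m ∈ K i :=
  Submodule.subset_span ⟨m, h, rfl⟩

lemma mul_left_mem_K {i j : Fin n} (hj : j ≠ i) {x} (hx : x ∈ K i) : jj j * x ∈ K i := by
  have h := (Submodule.map_span_le (LinearMap.mulLeft ℤ (jj j))
      {x | ∃ m : List (Fin n), m.head? ≠ some i ∧ x = wd m} (K i)).2 ?_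
  · exact h ⟨x, hx, rfl⟩
  · rintro y ⟨m, hm, rfl⟩
    have : (LinearMap.mulLeft ℤ (jj j)) (wd m) = wd (j :: m) := by simp
    rw [this]
    exact wd_mem_K (by simp [hj])

lemma mul_right_mem_K {i j : Fin n} (hj : j ≠ i) {x} (hx : x ∈ K i) : x * jj j ∈ K i := by
  have h := (Submodule.map_span_le (LinearMap.mulRight ℤ (jj j))
      {x | ∃ m : List (Fin n), m.head? ≠ some i ∧ x = wd m} (K i)).2 ?_
  · exact h ⟨x, hx, rfl⟩
  · rintro y ⟨m, hm, rfl⟩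
    have : (LinearMap.mulRight ℤ (jj j)) (wd m) = wd (m ++ [j]) := by
      simp [wd_append]
    rw [this]
    refine wd_mem_K ?_
    cases m with
    | nil => simpa using hj
    | cons a m' => simpa using hm

lemma coeff_K {i : Fin n} (t' : List (Fin n)) {x} (hx : x ∈ K i) : coeff (i :: t') x = 0 := by
  induction hx using Submodule.span_induction with
  | mem y hy =>
      obtain ⟨m, hm, rfl⟩ := hy
      rw [coeff_wd]
      have : m ≠ i :: t' := by rintro rfl; simp at hm
      simp [this]
  | zero => simp
  | add x y _ _ hx hy => simp [map_add, hx, hy]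
  | smul a x _ hx => rw [map_smul, hx, smul_zero]

lemma lnb_sub_wd_mem_K {i : Fin n} {u : List (Fin n)} (hu : i ∉ u) :
    lnb i u - wd (i :: u) ∈ K i := by
  induction u using List.reverseRecOn with
  | nil => simp
  | append_singleton t j ih =>
      have hit : i ∉ t := fun h => hu (by simp [h])
      have hji : j ≠ i := by
        intro h; exact hu (by simp [h])
      have ih' := ih hit
      set E := lnb i t - wd (i :: t) with hE
      have hlnb : lnb i (t ++ [j]) = lnb i t * jj j - jj j * lnb i t := lnb_append i t j
      have hw : wd (i :: t) * jj j = wd (i :: (t ++ [j])) := by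
        rw [show (i :: (t ++ [j])) = (i :: t) ++ [j] by simp, wd_append, wd_singleton]
      have key : lnb i (t ++ [j]) - wd (i :: (t ++ [j]))
          = E * jj j - jj j * wd (i :: t) - jj j * E := by
        rw [hlnb, ← hw, hE]; noncomm_ring
      rw [key]
      refine Submodule.sub_mem _ (Submodule.sub_mem _ ?_ ?_) ?_
      · exact mul_right_mem_K hji ih'
      · rw [show jj j * wd (i :: t) = wd (j :: i :: t) from (wd_cons j (i::t)).symm]
        exact wd_mem_K (by simp [hji])
      · exact mul_left_mem_K hji ih'

lemma coeff_lnb {i : Fin n} {u : List (Fin n)} (hu : i ∉ u) (t' : List (Fin n)) :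
    coeff (i :: t') (lnb i u) = if u = t' then 1 else 0 := by
  have h1 : lnb i u = wd (i :: u) + (lnb i u - wd (i :: u)) := by abel
  rw [h1, map_add, coeff_K t' (lnb_sub_wd_mem_K hu), add_zero, coeff_wd]
  simp


/-- left-normed brackets headed by `i` on support `s` -/
def S (i : Fin n) (s : Finset (Fin n)) : Set (FreeAlgebra ℤ (Fin n)) :=
  {x | ∃ u : List (Fin n), (i :: u).Nodup ∧ (i :: u).toFinset = s ∧ x = lnb i u}

lemma lieMono_lnb {i : Fin n} {u : List (Fin n)} (h : (i :: u).Nodup) :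
    LieMono n (i :: u).toFinset (lnb i u) := by
  induction u using List.reverseRecOn with
  | nil => simpa [lnb, jj] using LieMono.gen i
  | append_singleton t j ih =>
      have h' : (i :: t).Nodup := by
        have := h
        rw [show (i :: (t ++ [j])) = (i :: t) ++ [j] by simp, List.nodup_append] at this
        exact this.1
      have hj : j ∉ (i :: t) := by
        intro hmem
        have := h
        rw [show (i :: (t ++ [j])) = (i :: t) ++ [j] by simp, List.nodup_append] at this
        exact this.2.2 j hmem j (by simp) rfl
      have hdisj : Disjoint (i :: t).toFinset ({j} : Finset (Fin n)) := by
        simp only [Finset.disjoint_singleton_right, List.mem_toFinset]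
        exact hj
      have hb := LieMono.bracket (ih h') (LieMono.gen j) hdisj
      have hfs : (i :: t).toFinset ∪ ({j} : Finset (Fin n)) = (i :: (t ++ [j])).toFinset := by
        rw [show (i :: (t ++ [j])) = (i :: t) ++ [j] by simp, List.toFinset_append]
        simp
      rw [lnb_append]
      rw [← hfs]
      simpa [jj] using hb

lemma bracket_span {t : Finset (Fin n)} {b : FreeAlgebra ℤ (Fin n)} (hb : LieMono n t b) :
    ∀ {s : Finset (Fin n)} {a : FreeAlgebra ℤ (Fin n)} (i : Fin n), Disjoint s t →
      a ∈ Submodule.span ℤ (S i s) →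
      a * b - b * a ∈ Submodule.span ℤ (S i (s ∪ t)) := by
  induction hb with
  | gen j =>
      intro s a i hdisj ha
      have hj : j ∉ s := by simpa [Finset.disjoint_singleton_right] using hdisj
      have hmap := (Submodule.map_span_le
          (LinearMap.mulRight ℤ (jj j) - LinearMap.mulLeft ℤ (jj j)) (S i s)
          (Submodule.span ℤ (S i (s ∪ {j})))).2 ?_
      · have := hmap ⟨a, ha, rfl⟩
        simpa [jj] using this
      · rintro y ⟨u, hnd, hfs, rfl⟩
        have hval : (LinearMap.mulRight ℤ (jj j) - LinearMap.mulLeft ℤ (jj j)) (lnb i u)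
            = lnb i (u ++ [j]) := by
          rw [lnb_append]; simp
        rw [hval]
        refine Submodule.subset_span ⟨u ++ [j], ?_, ?_, rfl⟩
        · rw [show (i :: (u ++ [j])) = (i :: u) ++ [j] by simp, List.nodup_append]
          refine ⟨hnd, List.nodup_singleton j, ?_⟩
          intro x hx y hy hxy
          simp only [List.mem_singleton] at hy
          subst hy
          subst hxy
          exact hj (hfs ▸ List.mem_toFinset.2 hx)
        · rw [show (i :: (u ++ [j])) = (i :: u) ++ [j] by simp, List.toFinset_append, hfs]
          simp
  | @bracket t₁ t₂ b₁ b₂ hb1 hb2 hd12 ih1 ih2 =>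
      intro s a i hdisj ha
      rw [Finset.disjoint_union_right] at hdisj
      have c1 := ih1 i hdisj.1 ha
      have c2 := ih2 i hdisj.2 ha
      have d1 := ih2 i (by rw [Finset.disjoint_union_left]; exact ⟨hdisj.2, hd12⟩) c1
      have d2 := ih1 i (by rw [Finset.disjoint_union_left]; exact ⟨hdisj.1, hd12.symm⟩) c2
      have hfs1 : s ∪ t₁ ∪ t₂ = s ∪ (t₁ ∪ t₂) := Finset.union_assoc s t₁ t₂
      have hfs2 : s ∪ t₂ ∪ t₁ = s ∪ (t₁ ∪ t₂) := by
        rw [Finset.union_assoc, Finset.union_comm t₂ t₁]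
      rw [hfs1] at d1
      rw [hfs2] at d2
      have key : a * (b₁ * b₂ - b₂ * b₁) - (b₁ * b₂ - b₂ * b₁) * a
          = ((a * b₁ - b₁ * a) * b₂ - b₂ * (a * b₁ - b₁ * a))
            - ((a * b₂ - b₂ * a) * b₁ - b₁ * (a * b₂ - b₂ * a)) := by noncomm_ring
      rw [key]
      exact Submodule.sub_mem _ d1 d2

lemma lieMono_mem_span {s : Finset (Fin n)} {a : FreeAlgebra ℤ (Fin n)}
    (h : LieMono n s a) : ∀ i ∈ s, a ∈ Submodule.span ℤ (S i s) := by
  induction h with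
  | gen j =>
      intro i hi
      rw [Finset.mem_singleton] at hi
      subst hi
      exact Submodule.subset_span ⟨[], by simp, by simp, rfl⟩
  | @bracket s t a b ha hb hdisj iha ihb =>
      intro i hi
      rcases Finset.mem_union.1 hi with hi' | hi'
      · exact bracket_span hb i hdisj (iha i hi')
      · have h1 := bracket_span ha i hdisj.symm (ihb i hi')
        rw [Finset.union_comm t s] at h1
        have h2 := Submodule.neg_mem _ h1
        have : a * b - b * a = -(b * a - a * b) := by abel
        rw [this]
        exact h2


variable {m : ℕ}

/-- tail of the list of values of σ -/
def tl (σ : Equiv.Perm (Fin (m+1))) : List (Fin (m+1)) := List.ofFn (fun k : Fin m => σ k.succ)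

lemma ofFn_eq (σ : Equiv.Perm (Fin (m+1))) : List.ofFn ⇑σ = σ 0 :: tl σ := List.ofFn_succ (f := ⇑σ)

lemma nodup_ofFn_perm (σ : Equiv.Perm (Fin (m+1))) : (List.ofFn ⇑σ).Nodup :=
  List.nodup_ofFn.2 σ.injective

lemma toFinset_ofFn_perm (σ : Equiv.Perm (Fin (m+1))) :
    (List.ofFn ⇑σ).toFinset = Finset.univ := by
  ext x
  simp only [List.mem_toFinset, List.mem_ofFn, Finset.mem_univ, iff_true]
  exact ⟨σ.symm x, by simp⟩

lemma lnb_tl_mem (σ : Equiv.Perm (Fin (m+1))) (h : σ 0 = 0) :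
    lnb 0 (tl σ) ∈ LieN (m+1) := by
  have hnd : ((0 : Fin (m+1)) :: tl σ).Nodup := by
    rw [← h, ← ofFn_eq]; exact nodup_ofFn_perm σ
  have hfs : ((0 : Fin (m+1)) :: tl σ).toFinset = Finset.univ := by
    rw [← h, ← ofFn_eq]; exact toFinset_ofFn_perm σ
  have hLM := lieMono_lnb hnd
  rw [hfs] at hLM
  exact Submodule.subset_span hLM

/-- the extension of φ to the whole free algebra -/
def psi0 (φ : ↥(LieN (m+1)) →ₗ[ℤ] ℤ) : FreeAlgebra ℤ (Fin (m+1)) →ₗ[ℤ] ℤ :=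
  ∑ σ : Equiv.Perm (Fin (m+1)),
    (if h : σ 0 = 0 then φ ⟨lnb 0 (tl σ), lnb_tl_mem σ h⟩ else 0) • coeff (0 :: tl σ)

lemma psi0_lnb (φ : ↥(LieN (m+1)) →ₗ[ℤ] ℤ) {u : List (Fin (m+1))}
    (h1 : ((0 : Fin (m+1)) :: u).Nodup) (h2 : ((0 : Fin (m+1)) :: u).toFinset = Finset.univ)
    (hmem : lnb 0 u ∈ LieN (m+1)) :
    psi0 φ (lnb 0 u) = φ ⟨lnb 0 u, hmem⟩ := by
  classical
  have h0u : (0 : Fin (m+1)) ∉ u := (List.nodup_cons.1 h1).1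
  have hul : u.length = m := by
    have hc := List.toFinset_card_of_nodup h1
    rw [h2, Finset.card_univ, Fintype.card_fin] at hc
    simp only [List.length_cons] at hc
    omega
  have hlen : ((0 : Fin (m+1)) :: u).length = m + 1 := by simp [hul]
  set f : Fin (m+1) → Fin (m+1) :=
    fun k => ((0 : Fin (m+1)) :: u).get (Fin.cast hlen.symm k) with hf
  have hfinj : Function.Injective f :=
    (List.nodup_iff_injective_get.1 h1).comp (Fin.cast_injective _)
  have hfbij : Function.Bijective f := Finite.injective_iff_bijective.1 hfinj
  set σs : Equiv.Perm (Fin (m+1)) := Equiv.ofBijective f hfbij with hσs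
  have hofn : List.ofFn ⇑σs = (0 : Fin (m+1)) :: u := by
    apply List.ext_getElem
    · simp [hul]
    · intro i hi1 hi2
      rw [List.getElem_ofFn]
      show f _ = _
      simp [hf, List.get_eq_getElem]
  have hcons := hofn
  rw [ofFn_eq] at hcons
  have hσ0 : σs 0 = 0 := (List.cons.injEq _ _ _ _ ▸ hcons).1
  have htl : tl σs = u := (List.cons.injEq _ _ _ _ ▸ hcons).2
  have happ : psi0 φ (lnb 0 u)
      = ∑ σ : Equiv.Perm (Fin (m+1)),
        (if h : σ 0 = 0 then φ ⟨lnb 0 (tl σ), lnb_tl_mem σ h⟩ else 0)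
          * coeff (0 :: tl σ) (lnb 0 u) := by
    rw [psi0, LinearMap.sum_apply]
    refine Finset.sum_congr rfl fun σ _ => ?_
    rw [LinearMap.smul_apply, smul_eq_mul]
  rw [happ]
  rw [Finset.sum_eq_single σs]
  · rw [dif_pos hσ0, coeff_lnb h0u, if_pos htl.symm, mul_one]
    congr 1
    exact Subtype.ext (congrArg (lnb 0) htl)
  · intro σ _ hne
    rw [coeff_lnb h0u]
    by_cases hu : u = tl σ
    · rw [if_pos hu]
      have h0 : ¬ (σ 0 = 0) := by
        intro h0
        apply hne
        apply Equiv.coe_fn_injective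
        apply List.ofFn_injective
        rw [hofn, ofFn_eq, h0, ← hu]
      rw [dif_neg h0, zero_mul]
    · rw [if_neg hu, mul_zero]
  · intro h
    exact absurd (Finset.mem_univ σs) h


lemma span_S_le : Submodule.span ℤ (S (0 : Fin (m+1)) Finset.univ) ≤ LieN (m+1) := by
  rw [Submodule.span_le]
  rintro x ⟨u, hnd, hfs, rfl⟩
  have h := lieMono_lnb hnd
  rw [hfs] at h
  exact Submodule.subset_span h

lemma psi0_eq (φ : ↥(LieN (m+1)) →ₗ[ℤ] ℤ) :
    ∀ (x : FreeAlgebra ℤ (Fin (m+1)))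
      (_ : x ∈ Submodule.span ℤ (S (0 : Fin (m+1)) Finset.univ)) (hm : x ∈ LieN (m+1)),
      psi0 φ x = φ ⟨x, hm⟩ := by
  intro x hx'
  induction hx' using Submodule.span_induction with
  | mem y hy =>
      intro hm
      obtain ⟨u, hnd, hfs, rfl⟩ := hy
      exact psi0_lnb φ hnd hfs hm
  | zero =>
      intro hm
      rw [map_zero, show (⟨0, hm⟩ : ↥(LieN (m+1))) = 0 from rfl, map_zero]
  | add x y hx hy ihx ihy =>
      intro hm
      have hmx := span_S_le hx
      have hmy := span_S_le hy
      rw [map_add, ihx hmx, ihy hmy,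
        show (⟨x + y, hm⟩ : ↥(LieN (m+1))) = ⟨x, hmx⟩ + ⟨y, hmy⟩ from rfl, map_add]
  | smul a x hx ih =>
      intro hm
      have hmx := span_S_le hx
      rw [map_smul, ih hmx,
        show (⟨a • x, hm⟩ : ↥(LieN (m+1))) = a • ⟨x, hmx⟩ from rfl, map_smul]

lemma lieMono_zero {s : Finset (Fin 0)} {a : FreeAlgebra ℤ (Fin 0)} (h : LieMono 0 s a) :
    False := by
  induction h with
  | gen i => exact i.elim0
  | bracket _ _ _ ih _ => exact ih

end S4

theorem statement4 (n : ℕ) (φ : ↥(LieN n) →ₗ[ℤ] ℤ) :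
    ∃ ψ : ↥(T11 n) →ₗ[ℤ] ℤ,
      ∀ (x : FreeAlgebra ℤ (Fin n)) (hx : x ∈ LieN n) (hx' : x ∈ T11 n),
        ψ ⟨x, hx'⟩ = φ ⟨x, hx⟩ := by
  cases n with
  | zero =>
      refine ⟨0, ?_⟩
      intro x hx hx'
      have hx0 : x = 0 := by
        have hbot : LieN 0 = ⊥ := by
          rw [LieN, show {x | LieMono 0 Finset.univ x} = (∅ : Set _) from
            Set.eq_empty_iff_forall_notMem.2 (fun x h => S4.lieMono_zero h),
            Submodule.span_empty]
        rw [hbot, Submodule.mem_bot] at hx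
        exact hx
      subst hx0
      rw [show (⟨0, hx⟩ : ↥(LieN 0)) = 0 from rfl, map_zero]
      rfl
  | succ m =>
      refine ⟨(S4.psi0 φ).comp (T11 (m+1)).subtype, ?_⟩
      intro x hx hx'
      have hle : LieN (m+1) ≤ Submodule.span ℤ (S4.S (0 : Fin (m+1)) Finset.univ) := by
        rw [LieN, Submodule.span_le]
        intro g hg
        exact S4.lieMono_mem_span hg 0 (Finset.mem_univ 0)
      exact S4.psi0_eq φ x (hle hx) hx
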